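/- For every t > 0, P( there exist i, j ∈ {1,…,n} with |(1/d)(RRᵀ)_{ij} − I_{ij}| ≥ t ) ≤ 2n²·exp(−2dt²/M⁴). -/

import Mathlib

open scoped BigOperators Matrix
open MeasureTheory ProbabilityTheory

open scoped ENNReal
open Real

section GramHelpers

section
variable {Ω : Type*} [MeasureSpace Ω] [IsProbabilityMeasure (volume : Measure Ω)]

lemma my_integrable_of_abs_le {X : Ω → ℝ} (hX : Measurable X) {c : ℝ}
    (hb : ∀ᵐ ω, |X ω| ≤ c) : Integrable X := by
  refine (integrable_const c).mono' hX.aestronglyMeasurable ?_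
  filter_upwards [hb] with ω h
  simpa [Real.norm_eq_abs] using h

lemma my_integrable_exp_of_abs_le {X : Ω → ℝ} (hX : Measurable X) {c : ℝ}
    (hb : ∀ᵐ ω, |X ω| ≤ c) (u : ℝ) :
    Integrable (fun ω => exp (u * X ω)) := by
  refine (integrable_const (exp (|u| * c))).mono'
    ((hX.const_mul u).exp).aestronglyMeasurable ?_
  filter_upwards [hb] with ω h
  rw [Real.norm_eq_abs, Real.abs_exp]
  refine exp_le_exp.2 ((le_abs_self _).trans ?_)
  rw [abs_mul]
  exact mul_le_mul_of_nonneg_left h (abs_nonneg u)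

lemma my_mgf_le_of_abs_le {X : Ω → ℝ} (hX : Measurable X) {c : ℝ} (hc : 0 < c)
    (hb : ∀ᵐ ω, |X ω| ≤ c) (h0 : ∫ ω, X ω = 0) (u : ℝ) :
    mgf X volume u ≤ exp (u ^ 2 * c ^ 2 / 2) := by
  have hint : Integrable X := my_integrable_of_abs_le hX hb
  set A : ℝ := (exp (-(u * c)) + exp (u * c)) / 2 with hA
  set B : ℝ := (exp (u * c) - exp (-(u * c))) / (2 * c) with hB
  have key : ∀ᵐ ω, exp (u * X ω) ≤ A + B * X ω := by
    filter_upwards [hb] with ω h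
    rw [abs_le] at h
    have h1 : (0:ℝ) ≤ (c - X ω) / (2 * c) :=
      div_nonneg (by linarith [h.2]) (by linarith)
    have h2 : (0:ℝ) ≤ (c + X ω) / (2 * c) :=
      div_nonneg (by linarith [h.1]) (by linarith)
    have h3 : (c - X ω) / (2 * c) + (c + X ω) / (2 * c) = 1 := by
      field_simp
      ring
    have hcv := convexOn_exp.2 (Set.mem_univ (-(u * c))) (Set.mem_univ (u * c)) h1 h2 h3
    simp only [smul_eq_mul] at hcv
    have harg : (c - X ω) / (2 * c) * -(u * c) + (c + X ω) / (2 * c) * (u * c) = u * X ω := by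
      field_simp
      ring
    rw [harg] at hcv
    refine hcv.trans_eq ?_
    rw [hA, hB]
    field_simp
    ring
  have hintexp : Integrable (fun ω => exp (u * X ω)) := my_integrable_exp_of_abs_le hX hb u
  have h1 : mgf X volume u ≤ ∫ ω, (A + B * X ω) :=
    integral_mono_ae hintexp ((integrable_const A).add (hint.const_mul B)) key
  have h2 : ∫ ω, (A + B * X ω) = A := by
    rw [integral_add (integrable_const A) (hint.const_mul B), integral_const_mul, h0,
      integral_const]
    simp
  rw [h2] at h1
  refine h1.trans ?_
  have h3 : A = Real.cosh (u * c) := by rw [hA, Real.cosh_eq]; ring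
  rw [h3]
  refine (Real.cosh_le_exp_half_sq _).trans_eq ?_
  ring_nf
end

lemma my_indep_step {Ω : Type*} [MeasureSpace Ω] {n d : ℕ}
    (R : Ω → Matrix (Fin n) (Fin d) ℝ)
    (hmeas : ∀ i l, Measurable fun ω => R ω i l)
    (hindep : iIndepFun
      (fun (p : Fin n × Fin d) ω => R ω p.1 p.2) volume)
    (i j : Fin n) (μ0 : ℝ)
    (s : Finset (Fin d)) (a : Fin d) (ha : a ∉ s) :
    IndepFun (∑ l ∈ s, fun ω => R ω i l * R ω j l - μ0)
      (fun ω => R ω i a * R ω j a - μ0) volume := by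
  classical
  set S : Finset (Fin n × Fin d) := s.image (fun l => (i, l)) ∪ s.image (fun l => (j, l))
    with hSdef
  set T : Finset (Fin n × Fin d) := {(i, a), (j, a)} with hTdef
  have hST : Disjoint S T := by
    rw [Finset.disjoint_left]
    intro p hpS hpT
    have h2 : p.2 ∈ s := by
      simp only [hSdef, Finset.mem_union, Finset.mem_image] at hpS
      rcases hpS with ⟨l, hl, rfl⟩ | ⟨l, hl, rfl⟩ <;> exact hl
    have h3 : p.2 = a := by
      simp only [hTdef, Finset.mem_insert, Finset.mem_singleton] at hpT
      rcases hpT with rfl | rfl <;> rfl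
    exact ha (h3 ▸ h2)
  have hbase := hindep.indepFun_finset S T hST (fun p => hmeas p.1 p.2)
  have hiS : ∀ l ∈ s, (i, l) ∈ S := fun l hl =>
    Finset.mem_union_left _ (Finset.mem_image_of_mem _ hl)
  have hjS : ∀ l ∈ s, (j, l) ∈ S := fun l hl =>
    Finset.mem_union_right _ (Finset.mem_image_of_mem _ hl)
  have hiT : ((i, a) : Fin n × Fin d) ∈ T := by simp [hTdef]
  have hjT : ((j, a) : Fin n × Fin d) ∈ T := by simp [hTdef]
  let φ : ({x // x ∈ S} → ℝ) → ℝ := fun g =>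
    ∑ l ∈ s.attach, (g ⟨(i, l.1), hiS l.1 l.2⟩ * g ⟨(j, l.1), hjS l.1 l.2⟩ - μ0)
  let ψ : ({x // x ∈ T} → ℝ) → ℝ := fun g => g ⟨(i, a), hiT⟩ * g ⟨(j, a), hjT⟩ - μ0
  have hφ : Measurable φ :=
    Finset.measurable_sum _ (fun l _ =>
      ((measurable_pi_apply (⟨(i, l.1), hiS l.1 l.2⟩ : {x // x ∈ S})).mul
        (measurable_pi_apply (⟨(j, l.1), hjS l.1 l.2⟩ : {x // x ∈ S}))).sub measurable_const)
  have hψ : Measurable ψ :=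
    ((measurable_pi_apply (⟨(i, a), hiT⟩ : {x // x ∈ T})).mul
      (measurable_pi_apply (⟨(j, a), hjT⟩ : {x // x ∈ T}))).sub measurable_const
  have hcomp := hbase.comp hφ hψ
  have h1 : (φ ∘ fun ω (p : {x // x ∈ S}) => R ω (p : Fin n × Fin d).1 (p : Fin n × Fin d).2)
      = ∑ l ∈ s, fun ω => R ω i l * R ω j l - μ0 := by
    funext ω
    simp only [Function.comp_apply, φ, Finset.sum_apply]
    rw [← Finset.sum_attach s (fun l => R ω i l * R ω j l - μ0)]
  have h2 : (ψ ∘ fun ω (p : {x // x ∈ T}) => R ω (p : Fin n × Fin d).1 (p : Fin n × Fin d).2)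
      = fun ω => R ω i a * R ω j a - μ0 := rfl
  rw [h1, h2] at hcomp
  exact hcomp

lemma my_pair_bound {Ω : Type*} [MeasureSpace Ω] [IsProbabilityMeasure (volume : Measure Ω)]
    {n d : ℕ} {M : ℝ} (hM : 0 < M) (h1M : (1:ℝ) ≤ M ^ 2 / 4)
    (R : Ω → Matrix (Fin n) (Fin d) ℝ)
    (hmeas : ∀ i l, Measurable fun ω => R ω i l)
    (hindep : iIndepFun
      (fun (p : Fin n × Fin d) ω => R ω p.1 p.2) volume)
    (hmean : ∀ i l, ∫ ω, R ω i l = 0)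
    (hvar : ∀ i l, ∫ ω, (R ω i l) ^ 2 = 1)
    (hbound : ∀ i l, ∀ᵐ ω, |R ω i l| ≤ M / 2)
    (i j : Fin n) (t : ℝ) (ht : 0 < t) :
    volume {ω | (d:ℝ) * t ≤ |∑ l : Fin d, (R ω i l * R ω j l - (if i = j then (1:ℝ) else 0))|}
      ≤ ENNReal.ofReal (2 * exp (-2 * d * t ^ 2 / M ^ 4)) := by
  classical
  set μ0 : ℝ := if i = j then (1:ℝ) else 0 with hμ0
  set c : ℝ := M ^ 2 / 2 with hcdef
  have hc : 0 < c := by positivity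
  set X : Fin d → Ω → ℝ := fun l ω => R ω i l * R ω j l - μ0 with hXdef
  have hXmeas : ∀ l, Measurable (X l) := fun l =>
    ((hmeas i l).mul (hmeas j l)).sub measurable_const
  have hμ0abs : |μ0| ≤ M ^ 2 / 4 := by
    rw [hμ0]
    split_ifs <;> simp <;> linarith
  have hXbound : ∀ l, ∀ᵐ ω, |X l ω| ≤ c := by
    intro l
    filter_upwards [hbound i l, hbound j l] with ω h1 h2
    have habs : |R ω i l * R ω j l| ≤ M ^ 2 / 4 := by
      rw [abs_mul]
      calc |R ω i l| * |R ω j l| ≤ (M/2) * (M/2) :=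
        mul_le_mul h1 h2 (abs_nonneg _) (by linarith)
      _ = M ^ 2 / 4 := by ring
    calc |X l ω| ≤ |R ω i l * R ω j l| + |μ0| := abs_sub _ _
    _ ≤ M ^ 2 / 4 + M ^ 2 / 4 := add_le_add habs hμ0abs
    _ = c := by rw [hcdef]; ring
  have hprod_int : ∀ l, Integrable (fun ω => R ω i l * R ω j l) := by
    intro l
    refine my_integrable_of_abs_le ((hmeas i l).mul (hmeas j l)) (c := M ^ 2 / 4) ?_
    filter_upwards [hbound i l, hbound j l] with ω h1 h2
    rw [abs_mul]
    calc |R ω i l| * |R ω j l| ≤ (M/2) * (M/2) :=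
      mul_le_mul h1 h2 (abs_nonneg _) (by linarith)
    _ = M ^ 2 / 4 := by ring
  have hXmean : ∀ l, ∫ ω, X l ω = 0 := by
    intro l
    rw [hXdef]
    simp only
    rw [integral_sub (hprod_int l) (integrable_const μ0), integral_const]
    simp only [probReal_univ, one_smul]
    have hpm : ∫ ω, R ω i l * R ω j l = μ0 := by
      by_cases hij : i = j
      · subst hij
        have : (fun ω => R ω i l * R ω i l) = fun ω => (R ω i l) ^ 2 := by
          funext ω; ring
        rw [this, hvar i l, hμ0]
        simp
      · have hne : ((i, l) : Fin n × Fin d) ≠ (j, l) := by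
          simp [Prod.ext_iff, hij]
        have hind : IndepFun (fun ω => R ω i l) (fun ω => R ω j l) volume :=
          hindep.indepFun hne
        have hm := IndepFun.integral_mul_eq_mul_integral hind (hmeas i l).aestronglyMeasurable
          (hmeas j l).aestronglyMeasurable
        have heq : (fun ω => R ω i l * R ω j l)
            = ((fun ω => R ω i l) * fun ω => R ω j l) := rfl
        rw [heq, hm, hmean i l, hmean j l, hμ0]
        simp [hij]
    rw [hpm]
    ring
  -- mgf of partial sums
  have claim : ∀ (u : ℝ) (s : Finset (Fin d)),
      Integrable (fun ω => exp (u * (∑ l ∈ s, X l) ω)) ∧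
        mgf (∑ l ∈ s, X l) volume u ≤ exp (s.card * (u ^ 2 * c ^ 2 / 2)) := by
    intro u s
    induction s using Finset.induction_on with
    | empty =>
      constructor
      · simp only [Finset.sum_empty, Pi.zero_apply, mul_zero, Real.exp_zero]
        exact integrable_const (1:ℝ)

      · simp [mgf_zero_fun]
    | @insert a s ha IH =>
      have hind : IndepFun (X a) (∑ l ∈ s, X l) volume :=
        (my_indep_step R hmeas hindep i j μ0 s a ha).symm
      have hsum_meas : Measurable (∑ l ∈ s, X l) := by
        have : (∑ l ∈ s, X l) = fun ω => ∑ l ∈ s, X l ω := by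
          funext ω; simp [Finset.sum_apply]
        rw [this]
        exact Finset.measurable_sum s (fun l _ => hXmeas l)
      rw [Finset.sum_insert ha]
      constructor
      · exact hind.integrable_exp_mul_add
          (my_integrable_exp_of_abs_le (hXmeas a) (hXbound a) u) IH.1
      · rw [hind.mgf_add' (hXmeas a).aestronglyMeasurable hsum_meas.aestronglyMeasurable]
        calc mgf (X a) volume u * mgf (∑ l ∈ s, X l) volume u
            ≤ exp (u ^ 2 * c ^ 2 / 2) * exp (s.card * (u ^ 2 * c ^ 2 / 2)) :=
              mul_le_mul (my_mgf_le_of_abs_le (hXmeas a) hc (hXbound a) (hXmean a) u)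
                IH.2 mgf_nonneg (exp_pos _).le
        _ = exp ((insert a s).card * (u ^ 2 * c ^ 2 / 2)) := by
              rw [← exp_add, Finset.card_insert_of_notMem ha]
              push_cast
              ring_nf
  -- Chernoff
  set u : ℝ := 4 * t / M ^ 4 with hudef
  have hu : 0 < u := by positivity
  set Y : Ω → ℝ := ∑ l : Fin d, X l with hYdef
  have hexp_eq : -u * ((d:ℝ) * t) + (d:ℝ) * (u ^ 2 * c ^ 2 / 2) = -2 * d * t ^ 2 / M ^ 4 := by
    rw [hudef, hcdef]
    field_simp
    ring
  have hYcard : (Finset.univ : Finset (Fin d)).card = d := Finset.card_univ.trans (Fintype.card_fin d)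
  have hup : (volume {ω | (d:ℝ) * t ≤ Y ω}).toReal ≤ exp (-2 * d * t ^ 2 / M ^ 4) := by
    refine (measure_ge_le_exp_mul_mgf ((d:ℝ) * t) hu.le (claim u Finset.univ).1).trans ?_
    calc exp (-u * ((d:ℝ)*t)) * mgf Y volume u
        ≤ exp (-u * ((d:ℝ)*t)) * exp ((d:ℝ) * (u ^ 2 * c ^ 2 / 2)) := by
          refine mul_le_mul_of_nonneg_left ?_ (exp_pos _).le
          have := (claim u Finset.univ).2
          rwa [hYcard] at this
    _ = exp (-2 * d * t ^ 2 / M ^ 4) := by rw [← exp_add, hexp_eq]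
  have hlo : (volume {ω | Y ω ≤ -((d:ℝ) * t)}).toReal ≤ exp (-2 * d * t ^ 2 / M ^ 4) := by
    refine (measure_le_le_exp_mul_mgf (-((d:ℝ) * t)) (t := -u) (by linarith)
      ((claim (-u) Finset.univ).1)).trans ?_
    calc exp (-(-u) * -((d:ℝ)*t)) * mgf Y volume (-u)
        ≤ exp (-u * ((d:ℝ)*t)) * exp ((d:ℝ) * ((-u) ^ 2 * c ^ 2 / 2)) := by
          rw [show -(-u) * -((d:ℝ)*t) = -u * ((d:ℝ)*t) by ring]
          refine mul_le_mul_of_nonneg_left ?_ (exp_pos _).le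
          have := (claim (-u) Finset.univ).2
          rwa [hYcard] at this
    _ = exp (-2 * d * t ^ 2 / M ^ 4) := by
          rw [← exp_add, ← hexp_eq]
          ring_nf
  -- assemble
  have hsub : {ω | (d:ℝ) * t ≤ |∑ l : Fin d, (R ω i l * R ω j l - μ0)|}
      ⊆ {ω | (d:ℝ) * t ≤ Y ω} ∪ {ω | Y ω ≤ -((d:ℝ) * t)} := by
    intro ω hω
    simp only [Set.mem_setOf_eq] at hω
    have hYω : Y ω = ∑ l : Fin d, (R ω i l * R ω j l - μ0) := by
      rw [hYdef]
      simp [Finset.sum_apply, hXdef]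
    rw [← hYω] at hω
    rcases le_abs.mp hω with h | h
    · left
      exact h
    · right
      simp only [Set.mem_setOf_eq]
      linarith
  calc volume {ω | (d:ℝ) * t ≤ |∑ l : Fin d, (R ω i l * R ω j l - μ0)|}
      ≤ volume ({ω | (d:ℝ) * t ≤ Y ω} ∪ {ω | Y ω ≤ -((d:ℝ) * t)}) := measure_mono hsub
  _ ≤ volume {ω | (d:ℝ) * t ≤ Y ω} + volume {ω | Y ω ≤ -((d:ℝ) * t)} := measure_union_le _ _
  _ ≤ ENNReal.ofReal (exp (-2 * d * t ^ 2 / M ^ 4)) +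
        ENNReal.ofReal (exp (-2 * d * t ^ 2 / M ^ 4)) := by
      gcongr
      · exact (ENNReal.le_ofReal_iff_toReal_le (measure_ne_top _ _) (exp_pos _).le).2 hup
      · exact (ENNReal.le_ofReal_iff_toReal_le (measure_ne_top _ _) (exp_pos _).le).2 hlo
  _ = ENNReal.ofReal (2 * exp (-2 * d * t ^ 2 / M ^ 4)) := by
      rw [← ENNReal.ofReal_add (exp_pos _).le (exp_pos _).le]
      ring_nf

end GramHelpers

/-- Union bound over all entries: for entries `R_{il}` that are independent, mean zero,
variance one and bounded by `M/2` a.s.,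
`P(∃ i j, |(1/d)(R Rᵀ)_{ij} − I_{ij}| ≥ t) ≤ 2 n² exp(−2 d t² / M⁴)`. -/
theorem gram_concentration_union_bound
    {Ω : Type*} [MeasureSpace Ω] [IsProbabilityMeasure (volume : Measure Ω)]
    (n d : ℕ) (hn : 1 ≤ n) (hd : 1 ≤ d) (M : ℝ) (hM : 0 < M)
    (R : Ω → Matrix (Fin n) (Fin d) ℝ)
    (hmeas : ∀ i l, Measurable fun ω => R ω i l)
    (hindep : iIndepFun
      (fun (p : Fin n × Fin d) ω => R ω p.1 p.2) volume)
    (hmean : ∀ i l, ∫ ω, R ω i l = 0)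
    (hvar : ∀ i l, ∫ ω, (R ω i l) ^ 2 = 1)
    (hbound : ∀ i l, ∀ᵐ ω, |R ω i l| ≤ M / 2)
    (t : ℝ) (ht : 0 < t) :
    volume {ω | ∃ i j : Fin n,
        t ≤ |(1 / (d : ℝ)) * (R ω * (R ω)ᵀ) i j - (1 : Matrix (Fin n) (Fin n) ℝ) i j|}
      ≤ ENNReal.ofReal (2 * n ^ 2 * Real.exp (-2 * d * t ^ 2 / M ^ 4)) := by

  classical
  have hd0 : (0:ℝ) < d := by exact_mod_cast hd
  -- 1 ≤ M^2/4
  have h1M : (1:ℝ) ≤ M ^ 2 / 4 := by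
    let i0 : Fin n := ⟨0, hn⟩
    let l0 : Fin d := ⟨0, hd⟩
    have hsq_int : Integrable (fun ω => (R ω i0 l0) ^ 2) := by
      refine my_integrable_of_abs_le ((hmeas i0 l0).pow_const 2) (c := M ^ 2 / 4) ?_
      filter_upwards [hbound i0 l0] with ω h
      rw [abs_of_nonneg (sq_nonneg _), ← sq_abs]
      calc |R ω i0 l0| ^ 2 ≤ (M/2) ^ 2 := by
            exact pow_le_pow_left₀ (abs_nonneg _) h 2
      _ = M ^ 2 / 4 := by ring
    have hle : ∫ ω, (R ω i0 l0) ^ 2 ≤ ∫ (_ : Ω), M ^ 2 / 4 := by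
      refine integral_mono_ae hsq_int (integrable_const _) ?_
      filter_upwards [hbound i0 l0] with ω h
      rw [← sq_abs]
      calc |R ω i0 l0| ^ 2 ≤ (M/2) ^ 2 := pow_le_pow_left₀ (abs_nonneg _) h 2
      _ = M ^ 2 / 4 := by ring
    rw [hvar i0 l0, integral_const] at hle
    simpa using hle
  have hsub : {ω | ∃ i j : Fin n,
        t ≤ |(1 / (d : ℝ)) * (R ω * (R ω)ᵀ) i j - (1 : Matrix (Fin n) (Fin n) ℝ) i j|}
      ⊆ ⋃ i : Fin n, ⋃ j : Fin n,
        {ω | (d:ℝ) * t ≤ |∑ l : Fin d, (R ω i l * R ω j l - (if i = j then (1:ℝ) else 0))|} := by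
    intro ω hω
    obtain ⟨i, j, hij⟩ := hω
    refine Set.mem_iUnion.2 ⟨i, Set.mem_iUnion.2 ⟨j, ?_⟩⟩
    simp only [Set.mem_setOf_eq]
    have hmul : (R ω * (R ω)ᵀ) i j = ∑ l : Fin d, R ω i l * R ω j l := by
      simp [Matrix.mul_apply, Matrix.transpose_apply]
    have hsum : ∑ l : Fin d, (R ω i l * R ω j l - (if i = j then (1:ℝ) else 0))
        = (R ω * (R ω)ᵀ) i j - d * (if i = j then (1:ℝ) else 0) := by
      rw [Finset.sum_sub_distrib, Finset.sum_const, hmul]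
      simp [Finset.card_univ, nsmul_eq_mul]
    rw [hsum]
    have heq : (1 / (d:ℝ)) * (R ω * (R ω)ᵀ) i j - (1 : Matrix (Fin n) (Fin n) ℝ) i j
        = (1/(d:ℝ)) * ((R ω * (R ω)ᵀ) i j - d * (if i = j then (1:ℝ) else 0)) := by
      rw [Matrix.one_apply]
      field_simp
    rw [heq, abs_mul, abs_of_pos (by positivity : (0:ℝ) < 1/(d:ℝ))] at hij
    calc (d:ℝ) * t ≤ d * (1/(d:ℝ) * |(R ω * (R ω)ᵀ) i j - d * (if i = j then (1:ℝ) else 0)|) :=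
          mul_le_mul_of_nonneg_left hij hd0.le
    _ = |(R ω * (R ω)ᵀ) i j - d * (if i = j then (1:ℝ) else 0)| := by
          field_simp
  refine (measure_mono hsub).trans ?_
  refine (measure_iUnion_le _).trans ?_
  refine (ENNReal.tsum_le_tsum (fun i => measure_iUnion_le _)).trans ?_
  have hpb : ∀ i j : Fin n,
      volume {ω | (d:ℝ) * t ≤ |∑ l : Fin d, (R ω i l * R ω j l - (if i = j then (1:ℝ) else 0))|}
        ≤ ENNReal.ofReal (2 * exp (-2 * d * t ^ 2 / M ^ 4)) := fun i j =>
    my_pair_bound hM h1M R hmeas hindep hmean hvar hbound i j t ht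
  refine (ENNReal.tsum_le_tsum (fun i => ENNReal.tsum_le_tsum (fun j => hpb i j))).trans ?_
  have hconst : ∀ (c : ℝ≥0∞), ∑' (_ : Fin n), c = (n : ℝ≥0∞) * c := by
    intro c
    rw [tsum_fintype]
    simp [Finset.sum_const, Finset.card_univ, nsmul_eq_mul]
  rw [hconst, hconst]
  rw [← ENNReal.ofReal_natCast n, ← ENNReal.ofReal_mul (by positivity),
    ← ENNReal.ofReal_mul (by positivity)]
  refine le_of_eq ?_
  congr 1
  ring
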